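/- (Proposition 9) Let Σ be a finite 2-dimensional simplicial complex with β_2(Σ) = 0 such that the space Z_1(Σ^{(−1)}) of Z_2 1-cycles of the 1-skeleton Σ^{(−1)} admits a 2-complete basis (by Theorem 2 of the paper, this holds whenever Σ is PL embeddable into ℝ^{2}). Then 3·f_2(Σ) ≤ 2·f_1(Σ) − 3, and moreover f_2(Σ) ≤ 2·n − 5, where n is the number of vertices of Σ. -/

import Mathlib

open Finset

/-- A finite simplicial complex on a finite vertex type `V`:
a finite nonempty collection of nonempty finite sets (faces)
closed under taking nonempty subsets. -/
structure SComplex (V : Type) [DecidableEq V] [Fintype V] where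
  faces : Finset (Finset V)
  nonempty : faces.Nonempty
  no_empty : ∀ σ ∈ faces, σ ≠ ∅
  down_closed : ∀ σ ∈ faces, ∀ τ, τ ⊆ σ → τ ≠ ∅ → τ ∈ faces

namespace SComplex

variable {V : Type} [DecidableEq V] [Fintype V]

/-- The set of faces of dimension `i` (i.e. of cardinality `i+1`). -/
def facesDim (K : SComplex V) (i : ℕ) : Finset (Finset V) :=
  K.faces.filter (fun σ => σ.card = i + 1)

/-- `fnum K i` is the face number `f_i`. -/
def fnum (K : SComplex V) (i : ℕ) : ℕ := (K.facesDim i).card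

/-- The space of `Z_2` `i`-chains: functions from the `i`-faces to `Z_2`. -/
abbrev Chains (K : SComplex V) (i : ℕ) : Type := {σ // σ ∈ K.facesDim i} → ZMod 2

/-- The boundary map `∂_i : C_i → C_{i-1}` (and `∂_0 = 0`): the value of `∂ c` on an
`(i-1)`-face `τ` is the sum over `i`-faces `σ ⊇ τ` of `c σ`. -/
def boundary (K : SComplex V) (i : ℕ) : Chains K i →ₗ[ZMod 2] Chains K (i - 1) :=
  if i = 0 then 0 else
  { toFun := fun c τ =>
      ∑ σ : {σ // σ ∈ K.facesDim i}, if (τ : Finset V) ⊆ (σ : Finset V) then c σ else 0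
    map_add' := by
      intro c d
      funext τ
      show (∑ σ : {σ // σ ∈ K.facesDim i}, _) = _
      rw [Pi.add_apply, ← Finset.sum_add_distrib]
      apply Finset.sum_congr rfl
      intro σ _
      by_cases h : (τ : Finset V) ⊆ (σ : Finset V) <;> simp [h]
    map_smul' := by
      intro a c
      funext τ
      show (∑ σ : {σ // σ ∈ K.facesDim i}, _) = _
      rw [RingHom.id_apply, Pi.smul_apply, smul_eq_mul, Finset.mul_sum]
      apply Finset.sum_congr rfl
      intro σ _
      by_cases h : (τ : Finset V) ⊆ (σ : Finset V) <;> simp [h] }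

/-- The `i`-th `Z_2` Betti number: `dim ker ∂_i − rank ∂_{i+1}`. -/
noncomputable def betti (K : SComplex V) (i : ℕ) : ℕ :=
  Module.finrank (ZMod 2) (LinearMap.ker (K.boundary i)) -
    Module.finrank (ZMod 2) (LinearMap.range (K.boundary (i + 1)))

/-- The number of `i`-faces in the support of a chain. -/
def suppCard {K : SComplex V} {i : ℕ} (c : Chains K i) : ℕ :=
  (Finset.univ.filter (fun σ => c σ ≠ 0)).card

/-- The girth: the minimal support size of a nonzero `d`-cycle. -/
noncomputable def girth (K : SComplex V) (d : ℕ) : ℕ :=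
  sInf {n | ∃ c : Chains K d, c ∈ LinearMap.ker (K.boundary d) ∧ c ≠ 0 ∧ suppCard c = n}

/-- `Z_d(K)` admits an `m`-complete basis: a basis of the space of `d`-cycles such that every
`d`-face lies in the support of at most `m` basis elements. -/
def HasCompleteBasis (K : SComplex V) (d m : ℕ) : Prop :=
  ∃ (ι : Type) (_ : Fintype ι) (b : Module.Basis ι (ZMod 2) (LinearMap.ker (K.boundary d))),
    ∀ σ : {σ // σ ∈ K.facesDim d},
      (Finset.univ.filter (fun i : ι => (b i).1 σ ≠ 0)).card ≤ m

/-- `K` is `d`-dimensional: `d` is the maximal dimension of a face. -/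
def IsDim (K : SComplex V) (d : ℕ) : Prop :=
  (∀ σ ∈ K.faces, σ.card ≤ d + 1) ∧ ∃ σ ∈ K.faces, σ.card = d + 1

/-- `K` is pure `d`-dimensional: every face is contained in a `d`-face. -/
def IsPure (K : SComplex V) (d : ℕ) : Prop :=
  ∀ σ ∈ K.faces, ∃ τ ∈ K.faces, σ ⊆ τ ∧ τ.card = d + 1

/-- A `d`-dimensional complex is balanced if its vertices can be colored with `d+1` colors
so that the coloring is injective on every face. -/
def IsBalanced (K : SComplex V) (d : ℕ) : Prop :=
  ∃ coloring : V → Fin (d + 1), ∀ σ ∈ K.faces, Set.InjOn coloring (σ : Set V)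

/-- The `d`-skeleton of `K`: all faces of dimension at most `d`. -/
def skeleton (K : SComplex V) (d : ℕ) : SComplex V where
  faces := K.faces.filter (fun σ => σ.card ≤ d + 1)
  nonempty := by
    obtain ⟨σ, hσ⟩ := K.nonempty
    obtain ⟨v, hv⟩ := Finset.nonempty_iff_ne_empty.mpr (K.no_empty σ hσ)
    refine ⟨{v}, Finset.mem_filter.mpr ⟨K.down_closed σ hσ {v}
      (Finset.singleton_subset_iff.mpr hv) (Finset.singleton_ne_empty v), by simp⟩⟩
  no_empty := by
    intro σ hσ
    exact K.no_empty σ (Finset.mem_filter.mp hσ).1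
  down_closed := by
    intro σ hσ τ hτσ hτ
    rw [Finset.mem_filter] at hσ ⊢
    exact ⟨K.down_closed σ hσ.1 τ hτσ hτ, le_trans (Finset.card_le_card hτσ) hσ.2⟩

end SComplex

namespace Prop9Aux
open SComplex

set_option linter.unusedSectionVars false
variable {V : Type} [DecidableEq V] [Fintype V]

lemma card_filter_subtype {α : Type*} [DecidableEq α] (s : Finset α) (P : α → Prop)
    [DecidablePred P] :
    (Finset.univ.filter (fun e : {e // e ∈ s} => P e.1)).card = (s.filter P).card := by
  apply Finset.card_bij (fun e _ => e.1)
  · intro a ha; simp at ha ⊢; exact ha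
  · intro a _ b _ h; exact Subtype.ext h
  · intro b hb; simp at hb; exact ⟨⟨b, hb.1⟩, by simp [hb.2], rfl⟩

lemma sum_ite_count {s : Finset (Finset V)} (P : Finset V → Prop) [DecidablePred P] (x : ZMod 2) :
    (∑ e : {e // e ∈ s}, if P e.1 then x else 0) = ((s.filter P).card : ZMod 2) * x := by
  rw [← Finset.sum_filter, Finset.sum_const, card_filter_subtype, nsmul_eq_mul]

lemma mem_facesDim {K : SComplex V} {i : ℕ} {σ : Finset V} :
    σ ∈ K.facesDim i ↔ σ ∈ K.faces ∧ σ.card = i + 1 := Finset.mem_filter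

lemma finrank_chains (K : SComplex V) (i : ℕ) :
    Module.finrank (ZMod 2) (Chains K i) = K.fnum i := by
  simp [Chains, Module.finrank_pi, fnum]

lemma facesDim_skeleton (K : SComplex V) {i : ℕ} (h : i ≤ 1) :
    (K.skeleton 1).facesDim i = K.facesDim i := by
  ext σ
  simp only [facesDim, skeleton, Finset.mem_filter, Finset.filter_filter]
  constructor
  · rintro ⟨h1, _, h3⟩; exact ⟨h1, h3⟩
  · rintro ⟨h1, h3⟩; exact ⟨h1, by omega, h3⟩

lemma boundary_apply (K : SComplex V) (i : ℕ) (h : i ≠ 0) (c : Chains K i)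
    (τ : {τ // τ ∈ K.facesDim (i - 1)}) :
    K.boundary i c τ =
      ∑ σ : {σ // σ ∈ K.facesDim i}, if (τ : Finset V) ⊆ (σ : Finset V) then c σ else 0 := by
  simp only [boundary, if_neg h]; rfl

/-- number of faces of dim k between τ and σ. -/
lemma count_between (K : SComplex V) {τ σ : Finset V} (hσ : σ ∈ K.faces) (hτσ : τ ⊆ σ)
    (k : ℕ) (hk : τ.card ≤ k + 1) :
    ((K.facesDim k).filter (fun e => τ ⊆ e ∧ e ⊆ σ)).card
      = (σ.card - τ.card).choose (k + 1 - τ.card) := by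
  have hpc := Finset.card_powersetCard (k + 1 - τ.card) (σ \ τ)
  rw [Finset.card_sdiff_of_subset hτσ] at hpc
  rw [← hpc]
  apply Finset.card_bij (fun e _ => e \ τ)
  · intro e he
    simp only [Finset.mem_filter, mem_facesDim] at he
    obtain ⟨⟨_, hcard⟩, hτe, heσ⟩ := he
    rw [Finset.mem_powersetCard]
    exact ⟨Finset.sdiff_subset_sdiff heσ (le_refl _), by
      rw [Finset.card_sdiff_of_subset hτe, hcard]⟩
  · intro a ha b hb h
    simp only [Finset.mem_filter, mem_facesDim] at ha hb
    have h1 : a = a \ τ ∪ τ := by rw [Finset.sdiff_union_of_subset ha.2.1]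
    have h2 : b = b \ τ ∪ τ := by rw [Finset.sdiff_union_of_subset hb.2.1]
    rw [h1, h2, h]
  · intro w hw
    rw [Finset.mem_powersetCard] at hw
    refine ⟨w ∪ τ, ?_, ?_⟩
    · have hsub : w ∪ τ ⊆ σ := Finset.union_subset (hw.1.trans Finset.sdiff_subset) hτσ
      have hdisj : Disjoint w τ := Finset.disjoint_left.mpr (fun a haw => by
        have := hw.1 haw; rw [Finset.mem_sdiff] at this; exact this.2)
      have hcard : (w ∪ τ).card = k + 1 := by
        rw [Finset.card_union_of_disjoint hdisj, hw.2]; omega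
      have hne : w ∪ τ ≠ ∅ := by
        intro h0
        have : (w ∪ τ).card = 0 := by rw [h0]; simp
        omega
      simp only [Finset.mem_filter, mem_facesDim]
      exact ⟨⟨K.down_closed σ hσ _ hsub hne, hcard⟩, Finset.subset_union_right, hsub⟩
    · have hdisj : Disjoint w τ := Finset.disjoint_left.mpr (fun a haw => by
        have := hw.1 haw; rw [Finset.mem_sdiff] at this; exact this.2)
      rw [Finset.union_sdiff_right, Finset.sdiff_eq_self_of_disjoint hdisj]


open SComplex
set_option linter.unusedSectionVars false
variable {V : Type} [DecidableEq V] [Fintype V]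

lemma zmod2_eq_one {x : ZMod 2} (h : x ≠ 0) : x = 1 := by
  have : ∀ y : ZMod 2, y ≠ 0 → y = 1 := by decide
  exact this x h

lemma singleton_face {L : SComplex V} {e : Finset V} (he : e ∈ L.faces) {v : V} (hv : v ∈ e) :
    ({v} : Finset V) ∈ L.facesDim 0 :=
  mem_facesDim.mpr ⟨L.down_closed e he {v} (Finset.singleton_subset_iff.mpr hv)
    (Finset.singleton_ne_empty v), Finset.card_singleton v⟩

lemma even_degree (L : SComplex V) (c : Chains L 1) (hc : L.boundary 1 c = 0)
    {v : V} (hv : ({v} : Finset V) ∈ L.facesDim 0) :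
    2 ∣ ((Finset.univ.filter (fun e : {e // e ∈ L.facesDim 1} => c e ≠ 0)).filter
      (fun e => v ∈ e.1)).card := by
  have h0 : L.boundary 1 c ⟨{v}, hv⟩ = 0 := by rw [hc]; rfl
  rw [boundary_apply L 1 one_ne_zero c ⟨{v}, hv⟩] at h0
  rw [← Finset.sum_filter] at h0
  have hflt : Finset.univ.filter (fun e : {e // e ∈ L.facesDim 1} => ({v} : Finset V) ⊆ e.1)
      = Finset.univ.filter (fun e => v ∈ e.1) := by
    apply Finset.filter_congr; intro e _; simp [Finset.singleton_subset_iff]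
  rw [hflt, ← Finset.sum_filter_ne_zero] at h0
  rw [Finset.filter_filter] at h0
  have hset : (Finset.univ.filter (fun e : {e // e ∈ L.facesDim 1} => v ∈ e.1 ∧ c e ≠ 0))
      = (Finset.univ.filter (fun e : {e // e ∈ L.facesDim 1} => c e ≠ 0)).filter
        (fun e => v ∈ e.1) := by
    rw [Finset.filter_filter]
    apply Finset.filter_congr; intro e _; exact and_comm
  rw [hset] at h0
  have hone : ∀ e ∈ (Finset.univ.filter (fun e : {e // e ∈ L.facesDim 1} => c e ≠ 0)).filter
      (fun e => v ∈ e.1), c e = 1 := by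
    intro e he
    rw [Finset.mem_filter, Finset.mem_filter] at he
    exact zmod2_eq_one he.1.2
  rw [Finset.sum_congr rfl hone, Finset.sum_const, nsmul_eq_mul, mul_one] at h0
  exact (ZMod.natCast_eq_zero_iff _ 2).mp h0

lemma three_le_suppCard (L : SComplex V) (c : Chains L 1) (hc : L.boundary 1 c = 0)
    (hne : c ≠ 0) : 3 ≤ suppCard c := by
  classical
  set supp := Finset.univ.filter (fun e : {e // e ∈ L.facesDim 1} => c e ≠ 0) with hsupp
  have hcard2 : ∀ e : {e // e ∈ L.facesDim 1}, (e.1).card = 2 := fun e => (mem_facesDim.mp e.2).2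
  have hface : ∀ e : {e // e ∈ L.facesDim 1}, e.1 ∈ L.faces := fun e => (mem_facesDim.mp e.2).1
  have hT : ∀ (v : V) (e : {e // e ∈ L.facesDim 1}), e ∈ supp → v ∈ e.1 →
      ∃ e' ∈ supp, v ∈ e'.1 ∧ e' ≠ e := by
    intro v e he hv
    have hdvd := even_degree L c hc (singleton_face (hface e) hv)
    rw [← hsupp] at hdvd
    have hmem : e ∈ supp.filter (fun e => v ∈ e.1) := Finset.mem_filter.mpr ⟨he, hv⟩
    have h1 : 1 < (supp.filter (fun e => v ∈ e.1)).card := by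
      have hpos : 0 < (supp.filter (fun e => v ∈ e.1)).card := Finset.card_pos.mpr ⟨e, hmem⟩
      omega
    obtain ⟨e', he', hne'⟩ := Finset.exists_mem_ne h1 e
    rw [Finset.mem_filter] at he'
    exact ⟨e', he'.1, he'.2, hne'⟩
  obtain ⟨e₀, he₀⟩ : ∃ e₀, c e₀ ≠ 0 := by
    by_contra h; push_neg at h; exact hne (funext h)
  have he₀s : e₀ ∈ supp := Finset.mem_filter.mpr ⟨Finset.mem_univ _, he₀⟩
  obtain ⟨u, hu⟩ : (e₀.1).Nonempty := Finset.card_pos.mp (by rw [hcard2]; omega)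
  obtain ⟨e₁, he₁s, hue₁, hne10⟩ := hT u e₀ he₀s hu
  have hvne : e₀.1 ≠ e₁.1 := fun h => hne10 (Subtype.ext h.symm)
  obtain ⟨v, hv₀, hv₁⟩ : ∃ v ∈ e₀.1, v ∉ e₁.1 := by
    rw [← Finset.not_subset]
    intro hsub
    exact hvne (Finset.eq_of_subset_of_card_le hsub (by rw [hcard2, hcard2]))
  obtain ⟨e₂, he₂s, hve₂, hne20⟩ := hT v e₀ he₀s hv₀
  have hne21 : e₂ ≠ e₁ := fun h => hv₁ (h ▸ hve₂)
  have hsub : ({e₀, e₁, e₂} : Finset {e // e ∈ L.facesDim 1}) ⊆ supp := by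
    intro x hx
    simp only [Finset.mem_insert, Finset.mem_singleton] at hx
    rcases hx with h | h | h <;> subst h <;> assumption
  have hc3 : ({e₀, e₁, e₂} : Finset {e // e ∈ L.facesDim 1}).card = 3 := by
    rw [Finset.card_insert_of_notMem (by simp [hne10.symm, hne20.symm, Ne.symm]),
      Finset.card_pair (Ne.symm hne21)]
  calc 3 = ({e₀, e₁, e₂} : Finset {e // e ∈ L.facesDim 1}).card := hc3.symm
    _ ≤ supp.card := Finset.card_le_card hsub


open SComplex
set_option linter.unusedSectionVars false
variable {V : Type} [DecidableEq V] [Fintype V]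

lemma double_sum_count {s t : Finset (Finset V)} (P : Finset V → Prop) [DecidablePred P]
    (Q : Finset V → Finset V → Prop) [∀ e σ, Decidable (Q e σ)] (g : {σ // σ ∈ t} → ZMod 2) :
    (∑ e : {e // e ∈ s}, if P e.1 then (∑ σ : {σ // σ ∈ t}, if Q e.1 σ.1 then g σ else 0) else 0)
      = ∑ σ : {σ // σ ∈ t}, ((s.filter (fun e => P e ∧ Q e σ.1)).card : ZMod 2) * g σ := by
  have h1 : ∀ e : {e // e ∈ s},
      (if P e.1 then (∑ σ : {σ // σ ∈ t}, if Q e.1 σ.1 then g σ else 0) else 0)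
      = ∑ σ : {σ // σ ∈ t}, if P e.1 ∧ Q e.1 σ.1 then g σ else 0 := by
    intro e
    by_cases hp : P e.1
    · simp only [hp, if_true, true_and]
    · simp [hp]
  rw [Finset.sum_congr rfl (fun e _ => h1 e), Finset.sum_comm]
  apply Finset.sum_congr rfl
  intro σ _
  rw [sum_ite_count (fun e => P e ∧ Q e σ.1) (g σ)]

/-- The map sending a 2-chain of `K` to its boundary, viewed in the 1-chains of the 1-skeleton. -/
def dmap (K : SComplex V) : Chains K 2 →ₗ[ZMod 2] Chains (K.skeleton 1) 1 where
  toFun c := fun e => ∑ σ : {σ // σ ∈ K.facesDim 2}, if (e.1 : Finset V) ⊆ σ.1 then c σ else 0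
  map_add' c d := by
    funext e
    rw [Pi.add_apply, ← Finset.sum_add_distrib]
    apply Finset.sum_congr rfl
    intro σ _
    by_cases h : (e.1 : Finset V) ⊆ σ.1 <;> simp [h]
  map_smul' a c := by
    funext e
    rw [RingHom.id_apply, Pi.smul_apply, smul_eq_mul, Finset.mul_sum]
    apply Finset.sum_congr rfl
    intro σ _
    by_cases h : (e.1 : Finset V) ⊆ σ.1 <;> simp [h]

lemma dmap_mem_ker (K : SComplex V) (c : Chains K 2) :
    dmap K c ∈ LinearMap.ker ((K.skeleton 1).boundary 1) := by
  rw [LinearMap.mem_ker]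
  funext τ
  rw [boundary_apply _ 1 one_ne_zero]
  show (∑ e : {e // e ∈ (K.skeleton 1).facesDim 1}, if (τ.1 : Finset V) ⊆ e.1 then
    (∑ σ : {σ // σ ∈ K.facesDim 2}, if (e.1 : Finset V) ⊆ σ.1 then c σ else 0) else 0) = 0
  rw [double_sum_count (fun e => (τ.1 : Finset V) ⊆ e) (fun e σ => e ⊆ σ) c]
  apply Finset.sum_eq_zero
  intro σ _
  have hτcard : (τ.1 : Finset V).card = 1 := (mem_facesDim.mp τ.2).2
  have hσ := mem_facesDim.mp σ.2
  rw [facesDim_skeleton K (i := 1) (by norm_num)]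
  by_cases hsub : (τ.1 : Finset V) ⊆ σ.1
  · rw [count_between K hσ.1 hsub 1 (by omega)]
    rw [hσ.2, hτcard]
    have h2 : (((2 + 1 - 1).choose (1 + 1 - 1) : ℕ) : ZMod 2) = 0 := by decide
    rw [h2, zero_mul]
  · have : (K.facesDim 1).filter (fun e => (τ.1 : Finset V) ⊆ e ∧ e ⊆ σ.1) = ∅ := by
      apply Finset.filter_eq_empty_iff.mpr
      intro e _ h
      exact hsub (h.1.trans h.2)
    rw [this]
    simp

lemma fnum3_eq_zero (K : SComplex V) (hdim : K.IsDim 2) : K.fnum 3 = 0 := by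
  rw [fnum, Finset.card_eq_zero]
  apply Finset.filter_eq_empty_iff.mpr
  intro σ hσ h
  have := hdim.1 σ hσ
  omega

lemma ker2_eq_bot (K : SComplex V) (hdim : K.IsDim 2) (hβ : K.betti 2 = 0) :
    LinearMap.ker (K.boundary 2) = ⊥ := by
  have hr : Module.finrank (ZMod 2) (LinearMap.range (K.boundary 3)) = 0 := by
    have h1 := LinearMap.finrank_range_le (K.boundary 3)
    rw [finrank_chains, fnum3_eq_zero K hdim] at h1
    omega
  rw [betti] at hβ
  have h2 : Module.finrank (ZMod 2) (LinearMap.ker (K.boundary 2)) = 0 := by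
    have : K.boundary (2 + 1) = K.boundary 3 := rfl
    rw [this, hr] at hβ
    omega
  exact Submodule.finrank_eq_zero.mp h2

lemma f2_le_finrank (K : SComplex V) (hdim : K.IsDim 2) (hβ : K.betti 2 = 0) :
    K.fnum 2 ≤ Module.finrank (ZMod 2) (LinearMap.ker ((K.skeleton 1).boundary 1)) := by
  have hinj : Function.Injective
      (LinearMap.codRestrict (LinearMap.ker ((K.skeleton 1).boundary 1)) (dmap K)
        (dmap_mem_ker K)) := by
    rw [← LinearMap.ker_eq_bot]
    rw [LinearMap.ker_codRestrict]
    rw [eq_bot_iff]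
    intro c hc
    rw [← ker2_eq_bot K hdim hβ]
    rw [LinearMap.mem_ker] at hc ⊢
    funext e
    rw [boundary_apply K 2 (by norm_num) c e]
    have he1 : e.1 ∈ (K.skeleton 1).facesDim 1 := by
      rw [facesDim_skeleton K (i := 1) (by norm_num)]; exact e.2
    have := congrFun hc ⟨e.1, he1⟩
    exact this
  calc K.fnum 2 = Module.finrank (ZMod 2) (Chains K 2) := (finrank_chains K 2).symm
    _ ≤ _ := LinearMap.finrank_le_finrank_of_injective hinj


open SComplex
set_option linter.unusedSectionVars false
variable {V : Type} [DecidableEq V] [Fintype V]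

/-- The augmentation map on 0-chains. -/
def aug (L : SComplex V) : Chains L 0 →ₗ[ZMod 2] ZMod 2 where
  toFun c := ∑ τ : {τ // τ ∈ L.facesDim 0}, c τ
  map_add' c d := by simp [Finset.sum_add_distrib]
  map_smul' a c := by simp [Finset.mul_sum]

lemma rank_bound (L : SComplex V) (hvert : (L.facesDim 0).Nonempty) :
    L.fnum 1 + 1 ≤ Module.finrank (ZMod 2) (LinearMap.ker (L.boundary 1)) + L.fnum 0 := by
  have hrange : LinearMap.range (L.boundary 1) ≤ LinearMap.ker (aug L) := by
    rintro x ⟨c, rfl⟩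
    rw [LinearMap.mem_ker]
    show (∑ τ : {τ // τ ∈ L.facesDim 0}, L.boundary 1 c τ) = 0
    have hb : ∀ τ : {τ // τ ∈ L.facesDim (1-1)}, L.boundary 1 c τ =
        if True then ∑ e : {e // e ∈ L.facesDim 1},
          if (τ.1 : Finset V) ⊆ e.1 then c e else 0 else 0 := by
      intro τ
      rw [if_pos trivial]
      exact boundary_apply L 1 one_ne_zero c τ
    rw [Finset.sum_congr rfl (fun τ _ => hb τ)]
    rw [double_sum_count (fun _ => True) (fun τ e => τ ⊆ e) c]
    apply Finset.sum_eq_zero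
    intro e _
    have he := mem_facesDim.mp e.2
    have hfc : (L.facesDim 0).filter (fun τ => True ∧ τ ⊆ e.1)
        = (L.facesDim 0).filter (fun τ => (∅ : Finset V) ⊆ τ ∧ τ ⊆ e.1) := by
      apply Finset.filter_congr
      intro τ _
      simp
    rw [hfc, count_between L he.1 (Finset.empty_subset _) 0 (by simp)]
    rw [he.2]
    have h2 : (((1 + 1 - (∅ : Finset V).card).choose (0 + 1 - (∅ : Finset V).card) : ℕ) : ZMod 2)
        = 0 := by rw [Finset.card_empty]; decide
    rw [h2, zero_mul]
  have haugne : aug L ≠ 0 := by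
    obtain ⟨τ₀, hτ₀⟩ := hvert
    intro h0
    have h1 : aug L (fun τ => if τ = ⟨τ₀, hτ₀⟩ then 1 else 0) = 1 := by
      show (∑ τ : {τ // τ ∈ L.facesDim 0}, if τ = ⟨τ₀, hτ₀⟩ then (1 : ZMod 2) else 0) = 1
      simp
    rw [h0] at h1
    simp at h1
  have hker_aug : Module.finrank (ZMod 2) (LinearMap.ker (aug L)) + 1 ≤ L.fnum 0 := by
    have hrn := LinearMap.finrank_range_add_finrank_ker (aug L)
    rw [finrank_chains] at hrn
    have hpos : 0 < Module.finrank (ZMod 2) (LinearMap.range (aug L)) := by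
      rcases Nat.eq_zero_or_pos (Module.finrank (ZMod 2) (LinearMap.range (aug L))) with h | h
      · exfalso
        rw [Submodule.finrank_eq_zero, LinearMap.range_eq_bot] at h
        exact haugne h
      · exact h
    omega
  have hmono : Module.finrank (ZMod 2) (LinearMap.range (L.boundary 1))
      ≤ Module.finrank (ZMod 2) (LinearMap.ker (aug L)) :=
    Submodule.finrank_mono hrange
  have hrn1 := LinearMap.finrank_range_add_finrank_ker (L.boundary 1)
  rw [finrank_chains] at hrn1
  omega

lemma basis_count (L : SComplex V) {ι : Type} [Fintype ι]
    (b : Module.Basis ι (ZMod 2) (LinearMap.ker (L.boundary 1)))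
    (hb : ∀ e : {e // e ∈ L.facesDim 1},
      (Finset.univ.filter (fun i : ι => (b i).1 e ≠ 0)).card ≤ 2)
    (hι : Nonempty ι) :
    3 * Fintype.card ι + 3 ≤ 2 * L.fnum 1 := by
  classical
  set s : Chains L 1 := ∑ i : ι, ((b i : LinearMap.ker (L.boundary 1)) : Chains L 1) with hs
  have hsker : L.boundary 1 s = 0 := by
    rw [hs, map_sum]
    apply Finset.sum_eq_zero
    intro i _
    exact (b i).2
  have hsne : s ≠ 0 := by
    intro h0
    have hsum : (∑ i : ι, b i) = 0 := by
      apply Subtype.ext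
      rw [Submodule.coe_sum]
      exact h0
    obtain ⟨i₀⟩ := hι
    have hli := Fintype.linearIndependent_iff.mp b.linearIndependent (fun _ => (1 : ZMod 2))
    have : (1 : ZMod 2) = 0 := by
      apply hli _ i₀
      simpa using hsum
    simp at this
  have hs3 : 3 ≤ suppCard s := three_le_suppCard L s hsker hsne
  -- double counting
  have hsum_eq : (∑ i : ι, suppCard ((b i : LinearMap.ker (L.boundary 1)) : Chains L 1))
      = ∑ e : {e // e ∈ L.facesDim 1},
        (Finset.univ.filter (fun i : ι => (b i).1 e ≠ 0)).card := by
    simp only [suppCard, Finset.card_filter]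
    exact Finset.sum_comm
  have hlow : ∀ i : ι, 3 ≤ suppCard ((b i : LinearMap.ker (L.boundary 1)) : Chains L 1) := by
    intro i
    apply three_le_suppCard L _ (b i).2
    intro h0
    exact b.ne_zero i (Subtype.ext h0)
  have hcard_lower : 3 * Fintype.card ι
      ≤ ∑ i : ι, suppCard ((b i : LinearMap.ker (L.boundary 1)) : Chains L 1) := by
    calc 3 * Fintype.card ι = ∑ _i : ι, 3 := by
          rw [Finset.sum_const, Finset.card_univ, smul_eq_mul, mul_comm]
      _ ≤ _ := Finset.sum_le_sum (fun i _ => hlow i)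
  have hcover1 : ∀ e : {e // e ∈ L.facesDim 1}, s e ≠ 0 →
      (Finset.univ.filter (fun i : ι => (b i).1 e ≠ 0)).card = 1 := by
    intro e hse
    have hsval : s e = ∑ i : ι, (b i).1 e := by
      rw [hs, Finset.sum_apply]
    have : s e = ((Finset.univ.filter (fun i : ι => (b i).1 e ≠ 0)).card : ZMod 2) := by
      rw [hsval, ← Finset.sum_filter_ne_zero]
      have hone : ∀ i ∈ Finset.univ.filter (fun i : ι => (b i).1 e ≠ 0), (b i).1 e = 1 := by
        intro i hi
        exact zmod2_eq_one (Finset.mem_filter.mp hi).2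
      rw [Finset.sum_congr rfl hone, Finset.sum_const, nsmul_eq_mul, mul_one]
    rw [this] at hse
    have hodd : ¬ (2 ∣ (Finset.univ.filter (fun i : ι => (b i).1 e ≠ 0)).card) := by
      intro hdvd
      exact hse ((ZMod.natCast_eq_zero_iff _ 2).mpr hdvd)
    have hle := hb e
    omega
  -- split the sum over edges
  have hsplit := Finset.sum_filter_add_sum_filter_not Finset.univ
    (fun e : {e // e ∈ L.facesDim 1} => s e ≠ 0)
    (fun e => (Finset.univ.filter (fun i : ι => (b i).1 e ≠ 0)).card)
  have hfirst : (∑ e ∈ Finset.univ.filter (fun e : {e // e ∈ L.facesDim 1} => s e ≠ 0),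
      (Finset.univ.filter (fun i : ι => (b i).1 e ≠ 0)).card) = suppCard s := by
    rw [suppCard]
    rw [Finset.sum_congr rfl (fun e he => hcover1 e (Finset.mem_filter.mp he).2)]
    simp
  have hsecond : (∑ e ∈ Finset.univ.filter (fun e : {e // e ∈ L.facesDim 1} => ¬ s e ≠ 0),
      (Finset.univ.filter (fun i : ι => (b i).1 e ≠ 0)).card)
      ≤ 2 * (Finset.univ.filter (fun e : {e // e ∈ L.facesDim 1} => ¬ s e ≠ 0)).card := by
    rw [mul_comm]
    calc _ ≤ (Finset.univ.filter (fun e : {e // e ∈ L.facesDim 1} => ¬ s e ≠ 0)).card • 2 :=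
          Finset.sum_le_card_nsmul _ _ 2 (fun e _ => hb e)
      _ = _ := by rw [smul_eq_mul]
  have hcards : (Finset.univ.filter (fun e : {e // e ∈ L.facesDim 1} => s e ≠ 0)).card
      + (Finset.univ.filter (fun e : {e // e ∈ L.facesDim 1} => ¬ s e ≠ 0)).card
      = L.fnum 1 := by
    rw [Finset.card_filter_add_card_filter_not, Finset.card_univ]
    rw [fnum, ← Fintype.card_coe]
  have hsupple : suppCard s = (Finset.univ.filter
      (fun e : {e // e ∈ L.facesDim 1} => s e ≠ 0)).card := rfl
  omega


end Prop9Aux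

open SComplex
open Prop9Aux in
/-- Proposition 9. -/
theorem prop9 {V : Type} [DecidableEq V] [Fintype V]
    (K : SComplex V) (hdim : K.IsDim 2) (hβ : K.betti 2 = 0)
    (hcb : (K.skeleton 1).HasCompleteBasis 1 2) :
    (3 : ℤ) * (K.fnum 2 : ℤ) ≤ 2 * (K.fnum 1 : ℤ) - 3 ∧
      (K.fnum 2 : ℤ) ≤ 2 * (K.fnum 0 : ℤ) - 5 := by
  
  classical
  obtain ⟨ι, hfin, b, hb⟩ := hcb
  letI := hfin
  have hzcard : Module.finrank (ZMod 2) (LinearMap.ker ((K.skeleton 1).boundary 1))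
      = Fintype.card ι := Module.finrank_eq_card_basis b
  have hf2 : K.fnum 2 ≤ Fintype.card ι := by
    rw [← hzcard]; exact f2_le_finrank K hdim hβ
  have hf2pos : 1 ≤ K.fnum 2 := by
    obtain ⟨σ, hσf, hσc⟩ := hdim.2
    exact Finset.card_pos.mpr ⟨σ, mem_facesDim.mpr ⟨hσf, hσc⟩⟩
  have hι : Nonempty ι := by
    rw [← Fintype.card_pos_iff]; omega
  have hA := basis_count (K.skeleton 1) b hb hι
  have hvert : ((K.skeleton 1).facesDim 0).Nonempty := by
    rw [facesDim_skeleton K (i := 0) (by norm_num)]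
    obtain ⟨σ, hσ⟩ := K.nonempty
    obtain ⟨v, hv⟩ := Finset.nonempty_iff_ne_empty.mpr (K.no_empty σ hσ)
    exact ⟨{v}, singleton_face hσ hv⟩
  have hB := rank_bound (K.skeleton 1) hvert
  have hf1 : (K.skeleton 1).fnum 1 = K.fnum 1 := by
    simp only [fnum, facesDim_skeleton K (i := 1) (by norm_num)]
  have hf0 : (K.skeleton 1).fnum 0 = K.fnum 0 := by
    simp only [fnum, facesDim_skeleton K (i := 0) (by norm_num)]
  rw [hf1] at hA
  rw [hf1, hf0, hzcard] at hB
  constructor <;> omega
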